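/- Let ν ∈ P(X), τ > 0, c : X×X → ℝ continuous, and ψ : X → ℝ bounded measurable. Define φ(x) := −τ log ∫_X exp((ψ(y) − c(x,y))/τ) dν(y) for x ∈ X. Then the oscillation of φ is bounded by that of c: sup_{x∈X} φ(x) − inf_{x∈X} φ(x) ≤ sup_{(x,y)∈X×X} c(x,y) − inf_{(x,y)∈X×X} c(x,y). -/

import Mathlib

open MeasureTheory Real Set

abbrev Pt (d : ℕ) := EuclideanSpace ℝ (Fin d)

/-- the oscillation of the Schrödinger-type potential
`φ(x) = -τ log ∫ exp((ψ(y) - c(x,y))/τ) dν(y)` over `X` is bounded by the oscillation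
of the cost `c` over `X × X`. -/
theorem stmt_1 {d : ℕ} (X : Set (Pt d)) (hXc : IsCompact X) (hXne : X.Nonempty)
    (ν : Measure (Pt d)) [IsProbabilityMeasure ν] (hνX : ν Xᶜ = 0)
    (τ : ℝ) (hτ : 0 < τ)
    (c : Pt d × Pt d → ℝ) (hc : Continuous c)
    (ψ : Pt d → ℝ) (hψm : Measurable ψ) (hψb : ∃ M : ℝ, ∀ y, |ψ y| ≤ M)
    (φ : Pt d → ℝ)
    (hφ : ∀ x, φ x = -τ * Real.log (∫ y, Real.exp ((ψ y - c (x, y)) / τ) ∂ν)) :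
    sSup (φ '' X) - sInf (φ '' X) ≤ sSup (c '' (X ×ˢ X)) - sInf (c '' (X ×ˢ X)) := by
  obtain ⟨M, hM⟩ := hψb
  set Δ := sSup (c '' (X ×ˢ X)) - sInf (c '' (X ×ˢ X)) with hΔ
  have hXX : IsCompact (X ×ˢ X) := hXc.prod hXc
  have hcimg : IsCompact (c '' (X ×ˢ X)) := hXX.image hc
  -- bound for c on X × X
  obtain ⟨C, hC⟩ : ∃ C : ℝ, ∀ p ∈ X ×ˢ X, |c p| ≤ C := by
    obtain ⟨C, hC⟩ := hcimg.isBounded.subset_ball 0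
    exact ⟨|C|, fun p hp => by
      have := hC (mem_image_of_mem c hp)
      simp [Metric.mem_ball, Real.dist_eq] at this
      exact this.le.trans (le_abs_self C)⟩
  have haeX : ∀ᵐ y ∂ν, y ∈ X := by
    rw [ae_iff]
    exact hνX
  -- integrability
  have hint : ∀ x ∈ X, Integrable (fun y => Real.exp ((ψ y - c (x, y)) / τ)) ν := by
    intro x hx
    refine Integrable.mono' (integrable_const (Real.exp ((M + C) / τ))) ?_ ?_
    · exact (Measurable.exp ((hψm.sub ((hc.measurable).comp (measurable_const.prodMk
        measurable_id))).div_const τ)).aestronglyMeasurable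
    · filter_upwards [haeX] with y hy
      rw [Real.norm_eq_abs, abs_of_pos (Real.exp_pos _)]
      apply Real.exp_le_exp.2
      gcongr
      have h1 := (abs_le.1 (hM y)).2
      have h2 := (abs_le.1 (hC (x, y) ⟨hx, hy⟩)).1
      linarith
  have hpos : ∀ x ∈ X, 0 < ∫ y, Real.exp ((ψ y - c (x, y)) / τ) ∂ν := by
    intro x hx
    exact integral_exp_pos (hint x hx)
  -- key comparison
  have hkey : ∀ x ∈ X, ∀ x' ∈ X, φ x ≤ φ x' + Δ := by
    intro x hx x' hx'
    have hineq : ∀ᵐ y ∂ν, Real.exp ((ψ y - c (x', y)) / τ) ≤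
        Real.exp (Δ / τ) * Real.exp ((ψ y - c (x, y)) / τ) := by
      filter_upwards [haeX] with y hy
      rw [← Real.exp_add]
      apply Real.exp_le_exp.2
      rw [← add_div]
      gcongr
      have h1 : c (x, y) ≤ sSup (c '' (X ×ˢ X)) :=
        le_csSup hcimg.bddAbove (mem_image_of_mem c ⟨hx, hy⟩)
      have h2 : sInf (c '' (X ×ˢ X)) ≤ c (x', y) :=
        csInf_le hcimg.bddBelow (mem_image_of_mem c ⟨hx', hy⟩)
      simp only [hΔ]
      linarith
    have hIle : (∫ y, Real.exp ((ψ y - c (x', y)) / τ) ∂ν) ≤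
        Real.exp (Δ / τ) * ∫ y, Real.exp ((ψ y - c (x, y)) / τ) ∂ν := by
      calc (∫ y, Real.exp ((ψ y - c (x', y)) / τ) ∂ν)
          ≤ ∫ y, Real.exp (Δ / τ) * Real.exp ((ψ y - c (x, y)) / τ) ∂ν :=
            integral_mono_ae (hint x' hx') ((hint x hx).const_mul _) hineq
        _ = _ := integral_const_mul _ _
    have hlog : Real.log (∫ y, Real.exp ((ψ y - c (x', y)) / τ) ∂ν) ≤
        Δ / τ + Real.log (∫ y, Real.exp ((ψ y - c (x, y)) / τ) ∂ν) := by
      have := Real.log_le_log (hpos x' hx') hIle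
      rwa [Real.log_mul (Real.exp_pos _).ne' (hpos x hx).ne', Real.log_exp] at this
    rw [hφ x, hφ x']
    have := mul_le_mul_of_nonneg_left hlog hτ.le
    rw [mul_add, mul_div_cancel₀ _ hτ.ne'] at this
    linarith
  have hne : (φ '' X).Nonempty := hXne.image φ
  have hsup : sSup (φ '' X) ≤ sInf (φ '' X) + Δ := by
    apply csSup_le hne
    rintro b ⟨x, hx, rfl⟩
    have : φ x - Δ ≤ sInf (φ '' X) := by
      apply le_csInf hne
      rintro b' ⟨x', hx', rfl⟩
      linarith [hkey x hx x' hx']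
    linarith
  linarith
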